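/- Let (p_n)_{n≥1} ⊆ [1,∞) and (σ_n)_{n≥1} ⊆ (0,∞) with σ_n → ∞, assume dom f ≠ ∅ where f(x) := Σ_{n≥1} p_n e^{σ_n x}, and let α ∈ [0,∞) satisfy (−∞,−α) ⊆ dom f ⊆ (−∞,−α]. Define h_FD(x,y) := Σ_{n≥1} p_n ln(1+e^{x+σ_n y}). Then: (i) h_FD is differentiable at every (x,y) ∈ int(dom h_FD) = ℝ × (−∞,−α), with ∇h_FD(x,y) = Σ_{n≥1} p_n (e^{x+σ_n y}/(1+e^{x+σ_n y}))·(1,σ_n). (ii) If −α ∈ dom f and x ∈ ℝ, then ∂h_FD(x,−α) ≠ ∅ iff Σ_{n≥1} p_n σ_n e^{x−σ_n α} < ∞ iff the series Σ_{n≥1} p_n (e^{x−σ_n α}/(1+e^{x−σ_n α}))·(1,σ_n) converges in ℝ²; and if (ū,v̄) denotes its sum, then ∂h_FD(x,−α) = {ū} × [v̄,∞). -/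

import Mathlib

open Filter
open scoped ENNReal

/-- The real-valued sum `f(x) = Σ_{n} p_n e^{σ_n x}` (junk value when not summable). -/
noncomputable def fR (p σ : ℕ → ℝ) (x : ℝ) : ℝ := ∑' n, p n * Real.exp (σ n * x)

/-- The effective domain of `f`: the set of `x` where the series `Σ p_n e^{σ_n x}` converges. -/
def fDom (p σ : ℕ → ℝ) : Set ℝ := {x : ℝ | Summable fun n => p n * Real.exp (σ n * x)}

/-- The term-by-term derivative `f'(x) = Σ_n p_n σ_n e^{σ_n x}` (junk value when not summable). -/
noncomputable def fD (p σ : ℕ → ℝ) (x : ℝ) : ℝ := ∑' n, p n * σ n * Real.exp (σ n * x)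

/-- `γ := Σ_n p_n σ_n e^{−σ_n α} ∈ (0,+∞]`, as an extended real. -/
noncomputable def gammaE (p σ : ℕ → ℝ) (α : ℝ) : EReal :=
  ((∑' n, ENNReal.ofReal (p n * σ n * Real.exp (σ n * (-α))) : ℝ≥0∞) : EReal)

/-- `h_FD(x,y) = Σ_n p_n ln(1+e^{x+σ_n y}) ∈ (0,+∞]`. -/
noncomputable def hFDe (p σ : ℕ → ℝ) (z : ℝ × ℝ) : ℝ≥0∞ :=
  ∑' n, ENNReal.ofReal (p n * Real.log (1 + Real.exp (z.1 + σ n * z.2)))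

/-- The real-valued version of `h_FD` (junk value when not summable). -/
noncomputable def hFDR (p σ : ℕ → ℝ) (z : ℝ × ℝ) : ℝ :=
  ∑' n, p n * Real.log (1 + Real.exp (z.1 + σ n * z.2))

/-- The subdifferential of a function `g : ℝ² → ℝ ∪ {±∞}` at a point `z`. -/
def subd2 (g : ℝ × ℝ → EReal) (z : ℝ × ℝ) : Set (ℝ × ℝ) :=
  {w : ℝ × ℝ | ∀ z' : ℝ × ℝ,
    g z + ((w.1 * (z'.1 - z.1) + w.2 * (z'.2 - z.2) : ℝ) : EReal) ≤ g z'}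

/-- The continuous linear map `ℝ² → ℝ` given by the pair `(a,b)`, i.e. the candidate
(Fréchet) derivative with gradient `(a,b)`. -/
noncomputable def gradCLM (a b : ℝ) : (ℝ × ℝ) →L[ℝ] ℝ :=
  a • ContinuousLinearMap.fst ℝ ℝ ℝ + b • ContinuousLinearMap.snd ℝ ℝ ℝ


noncomputable def phi (t : ℝ) : ℝ := Real.log (1 + Real.exp t)
noncomputable def phi' (t : ℝ) : ℝ := Real.exp t / (1 + Real.exp t)

lemma one_add_exp_pos (t : ℝ) : 0 < 1 + Real.exp t := by positivity

lemma phi_pos (t : ℝ) : 0 < phi t :=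
  Real.log_pos (by linarith [Real.exp_pos t])

lemma phi_nonneg (t : ℝ) : 0 ≤ phi t := (phi_pos t).le

lemma phi_le_exp (t : ℝ) : phi t ≤ Real.exp t := by
  have := Real.log_le_sub_one_of_pos (one_add_exp_pos t)
  simpa [phi] using this

lemma phi'_nonneg (t : ℝ) : 0 ≤ phi' t := by
  unfold phi'; positivity

lemma phi'_le_exp (t : ℝ) : phi' t ≤ Real.exp t := by
  unfold phi'
  rw [div_le_iff₀ (one_add_exp_pos t)]
  nlinarith [Real.exp_pos t]

lemma phi'_le_phi (t : ℝ) : phi' t ≤ phi t := by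
  have h0 : (0:ℝ) < (1 + Real.exp t)⁻¹ := by positivity
  have := Real.log_le_sub_one_of_pos h0
  rw [Real.log_inv] at this
  have : -(1 + Real.exp t)⁻¹ + 1 ≤ Real.log (1 + Real.exp t) := by linarith
  unfold phi phi'
  have he : Real.exp t / (1 + Real.exp t) = 1 - (1 + Real.exp t)⁻¹ := by
    field_simp
    ring
  rw [he]; linarith

lemma exp_le_phi'_mul (t x : ℝ) (h : t ≤ x) :
    Real.exp t / (1 + Real.exp x) ≤ phi' t := by
  unfold phi'
  apply div_le_div_of_nonneg_left (Real.exp_pos t).le (one_add_exp_pos t)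
  have := Real.exp_le_exp.2 h
  linarith

lemma hasDerivAt_phi (t : ℝ) : HasDerivAt phi (phi' t) t := by
  have h1 : HasDerivAt (fun s : ℝ => 1 + Real.exp s) (Real.exp t) t :=
    (Real.hasDerivAt_exp t).const_add 1
  have := h1.log (one_add_exp_pos t).ne'
  exact this

lemma phi'_mono : Monotone phi' := by
  intro a b hab
  unfold phi'
  rw [div_le_div_iff₀ (one_add_exp_pos a) (one_add_exp_pos b)]
  have := Real.exp_le_exp.2 hab
  nlinarith [Real.exp_pos a, Real.exp_pos b]

lemma phi_mono : Monotone phi := by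
  intro a b hab
  unfold phi
  apply Real.log_le_log (one_add_exp_pos a)
  have := Real.exp_le_exp.2 hab; linarith

lemma phi_continuous : Continuous phi := by
  unfold phi
  exact ((continuous_const.add Real.continuous_exp)).log (fun t => (one_add_exp_pos t).ne')

lemma tangent_le (a b : ℝ) : phi' a * (b - a) ≤ phi b - phi a := by
  rcases lt_trichotomy a b with h | h | h
  · obtain ⟨c, hc, hc'⟩ := exists_hasDerivAt_eq_slope phi phi' h
      phi_continuous.continuousOn (fun y _ => hasDerivAt_phi y)
    have hmono : phi' a ≤ phi' c := phi'_mono hc.1.le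
    have hba : 0 < b - a := by linarith
    have : phi' c * (b - a) = phi b - phi a := by
      rw [hc']; field_simp
    nlinarith
  · simp [h]
  · obtain ⟨c, hc, hc'⟩ := exists_hasDerivAt_eq_slope phi phi' h
      phi_continuous.continuousOn (fun y _ => hasDerivAt_phi y)
    have hmono : phi' c ≤ phi' a := phi'_mono hc.2.le
    have hba : 0 < a - b := by linarith
    have : phi' c * (a - b) = phi a - phi b := by
      rw [hc']; field_simp
    nlinarith

section
variable {p σ : ℕ → ℝ}

lemma summable_shift {y : ℝ} (hy : Summable fun n => p n * Real.exp (σ n * y)) (x : ℝ) :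
    Summable fun n => p n * Real.exp (x + σ n * y) := by
  refine (hy.mul_left (Real.exp x)).congr fun n => ?_
  rw [Real.exp_add]; ring

lemma summable_phi (hp0 : ∀ n, 0 ≤ p n) {y : ℝ}
    (hy : Summable fun n => p n * Real.exp (σ n * y)) (x : ℝ) :
    Summable fun n => p n * phi (x + σ n * y) :=
  (summable_shift hy x).of_nonneg_of_le
    (fun n => mul_nonneg (hp0 n) (phi_nonneg _))
    (fun n => mul_le_mul_of_nonneg_left (phi_le_exp _) (hp0 n))

lemma summable_phi' (hp0 : ∀ n, 0 ≤ p n) {y : ℝ}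
    (hy : Summable fun n => p n * Real.exp (σ n * y)) (x : ℝ) :
    Summable fun n => p n * phi' (x + σ n * y) :=
  (summable_shift hy x).of_nonneg_of_le
    (fun n => mul_nonneg (hp0 n) (phi'_nonneg _))
    (fun n => mul_le_mul_of_nonneg_left (phi'_le_exp _) (hp0 n))

lemma summable_sigma_exp (hp0 : ∀ n, 0 ≤ p n) (hσpos : ∀ n, 0 < σ n) {y y' : ℝ}
    (hy' : Summable fun n => p n * Real.exp (σ n * y')) (hyy' : y < y') :
    Summable fun n => p n * σ n * Real.exp (σ n * y) := by
  set ε := y' - y with hε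
  have hεpos : 0 < ε := by simp [hε]; linarith
  refine (hy'.mul_left ε⁻¹).of_nonneg_of_le
    (fun n => mul_nonneg (mul_nonneg (hp0 n) (hσpos n).le) (Real.exp_pos _).le)
    (fun n => ?_)
  have hσle : σ n ≤ Real.exp (σ n * ε) / ε := by
    rw [le_div_iff₀ hεpos]
    have h1 : σ n * ε + 1 ≤ Real.exp (σ n * ε) := Real.add_one_le_exp _
    linarith
  calc p n * σ n * Real.exp (σ n * y)
      ≤ p n * (Real.exp (σ n * ε) / ε) * Real.exp (σ n * y) := by
        have := mul_le_mul_of_nonneg_left hσle (hp0 n)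
        exact mul_le_mul_of_nonneg_right this (Real.exp_pos _).le
    _ = ε⁻¹ * (p n * Real.exp (σ n * y')) := by
        have h3 : Real.exp (σ n * ε) * Real.exp (σ n * y) = Real.exp (σ n * y') := by
          rw [← Real.exp_add]; congr 1; simp [hε]; ring
        field_simp
        linear_combination p n * h3

lemma hFDe_eq_ofReal (hp0 : ∀ n, 0 ≤ p n) {z : ℝ × ℝ}
    (hz : Summable fun n => p n * phi (z.1 + σ n * z.2)) :
    hFDe p σ z = ENNReal.ofReal (hFDR p σ z) := by
  unfold hFDe hFDR
  exact (ENNReal.ofReal_tsum_of_nonneg (fun n => mul_nonneg (hp0 n) (phi_nonneg _)) hz).symm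

lemma hFDe_ne_top (hp0 : ∀ n, 0 ≤ p n) {z : ℝ × ℝ} (hz : z.2 ∈ fDom p σ) :
    hFDe p σ z ≠ ⊤ := by
  rw [hFDe_eq_ofReal hp0 (summable_phi hp0 hz z.1)]
  exact ENNReal.ofReal_ne_top

lemma summable_phi_of_ne_top (hp0 : ∀ n, 0 ≤ p n) {z : ℝ × ℝ} (h : hFDe p σ z ≠ ⊤) :
    Summable fun n => p n * phi (z.1 + σ n * z.2) := by
  have := ENNReal.summable_toReal h
  refine this.congr fun n => ?_
  exact ENNReal.toReal_ofReal (mul_nonneg (hp0 n) (phi_nonneg _))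
lemma exp_half_le_phi {t : ℝ} (h : Real.exp t ≤ 1) : Real.exp t / 2 ≤ phi t := by
  refine le_trans ?_ (phi'_le_phi t)
  unfold phi'
  apply div_le_div_of_nonneg_left (Real.exp_pos t).le (by positivity)
  linarith


lemma mem_fDom_of_ne_top (hp : ∀ n, 1 ≤ p n) {z : ℝ × ℝ} (h : hFDe p σ z ≠ ⊤) :
    z.2 ∈ fDom p σ := by
  have hp0 : ∀ n, 0 ≤ p n := fun n => le_trans zero_le_one (hp n)
  have hs := summable_phi_of_ne_top hp0 h
  have h0 := hs.tendsto_atTop_zero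
  have hφ0 : Tendsto (fun n => phi (z.1 + σ n * z.2)) atTop (nhds 0) := by
    refine squeeze_zero (fun n => phi_nonneg _) (fun n => ?_) h0
    calc phi (z.1 + σ n * z.2) = 1 * phi (z.1 + σ n * z.2) := (one_mul _).symm
      _ ≤ p n * phi (z.1 + σ n * z.2) :=
        mul_le_mul_of_nonneg_right (hp n) (phi_nonneg _)
  have hev : ∀ᶠ n in atTop, Real.exp (z.1 + σ n * z.2) ≤ 1 := by
    have hlog2 : (0:ℝ) < Real.log 2 := Real.log_pos one_lt_two
    filter_upwards [hφ0.eventually (eventually_lt_nhds hlog2)] with n hn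
    by_contra hc
    push_neg at hc
    have : Real.log 2 ≤ phi (z.1 + σ n * z.2) := by
      unfold phi
      apply Real.log_le_log (by norm_num)
      linarith
    linarith
  obtain ⟨N, hN⟩ := eventually_atTop.1 hev
  have hsum' : Summable fun n => p (n + N) * Real.exp (σ (n + N) * z.2) := by
    refine (((summable_nat_add_iff N).2 hs).mul_left
      (2 / Real.exp z.1)).of_nonneg_of_le
      (fun n => mul_nonneg (hp0 _) (Real.exp_pos _).le) (fun n => ?_)
    have hb : Real.exp (z.1 + σ (n + N) * z.2) / 2 ≤ phi (z.1 + σ (n + N) * z.2) :=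
      exp_half_le_phi (hN (n + N) (Nat.le_add_left N n))
    rw [Real.exp_add] at hb
    have hez : (0:ℝ) < Real.exp z.1 := Real.exp_pos _
    rw [div_mul_eq_mul_div, mul_comm (2:ℝ), mul_div_assoc, mul_assoc]
    apply mul_le_mul_of_nonneg_left _ (hp0 _)
    rw [← mul_div_assoc, le_div_iff₀ hez]
    nlinarith [hb]
  exact (summable_nat_add_iff N).1 hsum'

lemma interior_eq (hp : ∀ n, 1 ≤ p n) {α : ℝ}
    (h1 : Set.Iio (-α) ⊆ fDom p σ) (h2 : fDom p σ ⊆ Set.Iic (-α)) :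
    interior {z : ℝ × ℝ | hFDe p σ z < ⊤} = Set.univ ×ˢ Set.Iio (-α) := by
  have hp0 : ∀ n, 0 ≤ p n := fun n => le_trans zero_le_one (hp n)
  apply subset_antisymm
  · have hsub : {z : ℝ × ℝ | hFDe p σ z < ⊤} ⊆ Set.univ ×ˢ Set.Iic (-α) :=
      fun z hz => ⟨trivial, h2 (mem_fDom_of_ne_top hp hz.ne)⟩
    calc interior {z : ℝ × ℝ | hFDe p σ z < ⊤}
        ⊆ interior (Set.univ ×ˢ Set.Iic (-α)) := interior_mono hsub
      _ = Set.univ ×ˢ Set.Iio (-α) := by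
          rw [interior_prod_eq, interior_univ, interior_Iic]
  · rw [IsOpen.subset_interior_iff (isOpen_univ.prod isOpen_Iio)]
    rintro z ⟨-, hz2⟩
    exact lt_top_iff_ne_top.2 (hFDe_ne_top hp0 (h1 hz2))
lemma summable_sigma_shift (hp0 : ∀ n, 0 ≤ p n) (hσpos : ∀ n, 0 < σ n) {α : ℝ}
    (h1 : Set.Iio (-α) ⊆ fDom p σ) {y : ℝ} (hy : y < -α) (x : ℝ) :
    Summable fun n => p n * σ n * Real.exp (x + σ n * y) := by
  have hmid : y < (y + -α) / 2 := by linarith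
  have hmid2 : (y + -α) / 2 < -α := by linarith
  have h := summable_sigma_exp hp0 hσpos (h1 hmid2) hmid
  refine (h.mul_left (Real.exp x)).congr fun n => ?_
  rw [Real.exp_add]; ring

lemma summable_sigma_phi' (hp0 : ∀ n, 0 ≤ p n) (hσpos : ∀ n, 0 < σ n) {α : ℝ}
    (h1 : Set.Iio (-α) ⊆ fDom p σ) {y : ℝ} (hy : y < -α) (x : ℝ) :
    Summable fun n => p n * σ n * phi' (x + σ n * y) := by
  refine (summable_sigma_shift hp0 hσpos h1 hy x).of_nonneg_of_le
    (fun n => mul_nonneg (mul_nonneg (hp0 n) (hσpos n).le) (phi'_nonneg _))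
    (fun n => mul_le_mul_of_nonneg_left (phi'_le_exp _)
      (mul_nonneg (hp0 n) (hσpos n).le))

lemma norm_gradCLM_le (a b : ℝ) : ‖gradCLM a b‖ ≤ |a| + |b| := by
  refine ContinuousLinearMap.opNorm_le_bound _ (by positivity) fun v => ?_
  have hv : gradCLM a b v = a * v.1 + b * v.2 := by
    simp [gradCLM, smul_eq_mul]
  rw [hv]
  have h1 : |v.1| ≤ ‖v‖ := norm_fst_le v
  have h2 : |v.2| ≤ ‖v‖ := norm_snd_le v
  calc ‖a * v.1 + b * v.2‖ ≤ |a * v.1| + |b * v.2| := abs_add_le _ _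
    _ = |a| * |v.1| + |b| * |v.2| := by rw [abs_mul, abs_mul]
    _ ≤ |a| * ‖v‖ + |b| * ‖v‖ :=
        add_le_add (mul_le_mul_of_nonneg_left h1 (abs_nonneg a))
          (mul_le_mul_of_nonneg_left h2 (abs_nonneg b))
    _ = (|a| + |b|) * ‖v‖ := by ring

lemma term_hasFDerivAt (n : ℕ) (z : ℝ × ℝ) :
    HasFDerivAt (fun z : ℝ × ℝ => p n * phi (z.1 + σ n * z.2))
      (gradCLM (p n * phi' (z.1 + σ n * z.2)) (p n * σ n * phi' (z.1 + σ n * z.2))) z := by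
  have hl : HasFDerivAt (fun z : ℝ × ℝ => z.1 + σ n * z.2)
      (ContinuousLinearMap.fst ℝ ℝ ℝ + σ n • ContinuousLinearMap.snd ℝ ℝ ℝ) z :=
    (hasFDerivAt_fst).add ((hasFDerivAt_snd).const_mul (σ n))
  have hφ := (hasDerivAt_phi (z.1 + σ n * z.2)).comp_hasFDerivAt z hl
  have hf := hφ.const_mul (p n)
  have heq : p n • phi' (z.1 + σ n * z.2) •
      (ContinuousLinearMap.fst ℝ ℝ ℝ + σ n • ContinuousLinearMap.snd ℝ ℝ ℝ) =
      gradCLM (p n * phi' (z.1 + σ n * z.2)) (p n * σ n * phi' (z.1 + σ n * z.2)) := by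
    refine ContinuousLinearMap.ext fun v => ?_
    simp [gradCLM, smul_eq_mul]
    ring
  rw [heq] at hf
  exact hf

set_option maxHeartbeats 1000000 in
lemma part2 (hp : ∀ n, 1 ≤ p n) (hσpos : ∀ n, 0 < σ n) {α : ℝ}
    (h1 : Set.Iio (-α) ⊆ fDom p σ) {x y : ℝ} (hy : y < -α) :
    HasFDerivAt (hFDR p σ)
      (gradCLM (∑' n, p n * phi' (x + σ n * y)) (∑' n, p n * σ n * phi' (x + σ n * y)))
      (x, y) := by
  have hp0 : ∀ n, 0 ≤ p n := fun n => le_trans zero_le_one (hp n)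
  set r : ℝ := (-α - y) / 2 with hr
  have hrpos : 0 < r := by rw [hr]; linarith
  have hyr : y + r < -α := by rw [hr]; linarith
  set s : Set (ℝ × ℝ) := Metric.ball (x, y) r with hs
  have hball : ∀ z ∈ s, z.1 ≤ x + r ∧ z.2 ≤ y + r := by
    intro z hz
    rw [hs, Metric.mem_ball, Prod.dist_eq] at hz
    have h1' : dist z.1 x < r := lt_of_le_of_lt (le_max_left _ _) hz
    have h2' : dist z.2 y < r := lt_of_le_of_lt (le_max_right _ _) hz
    rw [Real.dist_eq] at h1' h2'
    obtain ⟨a, b⟩ := abs_lt.1 h1'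
    obtain ⟨c, d⟩ := abs_lt.1 h2'
    exact ⟨by linarith, by linarith⟩
  set u : ℕ → ℝ := fun n =>
    p n * Real.exp (x + r + σ n * (y + r)) + p n * σ n * Real.exp (x + r + σ n * (y + r))
    with hu_def
  have hu : Summable u :=
    (summable_shift (h1 hyr) (x + r)).add (summable_sigma_shift hp0 hσpos h1 hyr (x + r))
  have hbound : ∀ (n : ℕ), ∀ z ∈ s,
      ‖gradCLM (p n * phi' (z.1 + σ n * z.2)) (p n * σ n * phi' (z.1 + σ n * z.2))‖ ≤ u n := by
    intro n z hz
    obtain ⟨hz1, hz2⟩ := hball z hz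
    have ht : z.1 + σ n * z.2 ≤ x + r + σ n * (y + r) := by
      have := mul_le_mul_of_nonneg_left hz2 (hσpos n).le
      linarith
    have ha : |p n * phi' (z.1 + σ n * z.2)| ≤ p n * Real.exp (x + r + σ n * (y + r)) := by
      rw [abs_of_nonneg (mul_nonneg (hp0 n) (phi'_nonneg _))]
      exact mul_le_mul_of_nonneg_left
        (le_trans (phi'_le_exp _) (Real.exp_le_exp.2 ht)) (hp0 n)
    have hb : |p n * σ n * phi' (z.1 + σ n * z.2)| ≤
        p n * σ n * Real.exp (x + r + σ n * (y + r)) := by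
      rw [abs_of_nonneg (mul_nonneg (mul_nonneg (hp0 n) (hσpos n).le) (phi'_nonneg _))]
      exact mul_le_mul_of_nonneg_left
        (le_trans (phi'_le_exp _) (Real.exp_le_exp.2 ht))
        (mul_nonneg (hp0 n) (hσpos n).le)
    exact le_trans (norm_gradCLM_le _ _) (add_le_add ha hb)
  have key := hasFDerivAt_tsum_of_isPreconnected
    (f := fun (n : ℕ) (z : ℝ × ℝ) => p n * phi (z.1 + σ n * z.2))
    (f' := fun (n : ℕ) (z : ℝ × ℝ) =>
      gradCLM (p n * phi' (z.1 + σ n * z.2)) (p n * σ n * phi' (z.1 + σ n * z.2)))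
    hu (Metric.isOpen_ball) ((convex_ball _ _).isPreconnected)
    (fun n z _ => term_hasFDerivAt (p := p) (σ := σ) n z)
    hbound (Metric.mem_ball_self hrpos)
    (summable_phi hp0 (h1 hy) x) (Metric.mem_ball_self hrpos)
  have hid : (fun z : ℝ × ℝ => ∑' n, p n * phi (z.1 + σ n * z.2)) = hFDR p σ := rfl
  rw [hid] at key
  refine key.congr_fderiv ?_
  symm
  have hsa : Summable fun n => p n * phi' (x + σ n * y) := summable_phi' hp0 (h1 hy) x
  have hsb : Summable fun n => p n * σ n * phi' (x + σ n * y) :=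
    summable_sigma_phi' hp0 hσpos h1 hy x
  unfold gradCLM
  rw [Summable.tsum_add (hsa.smul_const _) (hsb.smul_const _),
    Summable.tsum_smul_const hsa, Summable.tsum_smul_const hsb]
lemma hFDR_eq_phi (z : ℝ × ℝ) : hFDR p σ z = ∑' n, p n * phi (z.1 + σ n * z.2) := rfl

lemma hFDR_nonneg (hp0 : ∀ n, 0 ≤ p n) (z : ℝ × ℝ) : 0 ≤ hFDR p σ z :=
  tsum_nonneg fun n => mul_nonneg (hp0 n) (phi_nonneg _)

lemma coe_hFDe (hp0 : ∀ n, 0 ≤ p n) {z : ℝ × ℝ} (hz : z.2 ∈ fDom p σ) :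
    ((hFDe p σ z : ℝ≥0∞) : EReal) = ((hFDR p σ z : ℝ) : EReal) := by
  rw [hFDe_eq_ofReal hp0 (summable_phi hp0 hz z.1), EReal.coe_ennreal_ofReal,
    max_eq_left (hFDR_nonneg hp0 z)]

lemma subd2_iff_real (hp : ∀ n, 1 ≤ p n) {z : ℝ × ℝ} (hz : z.2 ∈ fDom p σ) (w : ℝ × ℝ) :
    w ∈ subd2 (fun z => ((hFDe p σ z : ℝ≥0∞) : EReal)) z ↔
      ∀ z' : ℝ × ℝ, z'.2 ∈ fDom p σ →
        hFDR p σ z + (w.1 * (z'.1 - z.1) + w.2 * (z'.2 - z.2)) ≤ hFDR p σ z' := by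
  have hp0 : ∀ n, 0 ≤ p n := fun n => le_trans zero_le_one (hp n)
  constructor
  · intro hw z' hz'
    have := hw z'
    simp only at this
    rw [coe_hFDe hp0 hz, coe_hFDe hp0 hz', ← EReal.coe_add, EReal.coe_le_coe_iff] at this
    exact this
  · intro hw z'
    by_cases hz' : z'.2 ∈ fDom p σ
    · simp only
      rw [coe_hFDe hp0 hz, coe_hFDe hp0 hz', ← EReal.coe_add, EReal.coe_le_coe_iff]
      exact hw z' hz'
    · have : hFDe p σ z' = ⊤ := by
        by_contra hc
        exact hz' (mem_fDom_of_ne_top hp hc)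
      simp only
      rw [this, EReal.coe_ennreal_top]
      exact le_top

/-- core convexity inequality -/
lemma core_ineq (hp0 : ∀ n, 0 ≤ p n) (hσpos : ∀ n, 0 < σ n) {α x : ℝ}
    (hd : -α ∈ fDom p σ)
    (hsb : Summable fun n => p n * σ n * phi' (x + σ n * -α))
    {z' : ℝ × ℝ} (hz' : z'.2 ∈ fDom p σ) :
    hFDR p σ (x, -α) + ((∑' n, p n * phi' (x + σ n * -α)) * (z'.1 - x)
      + (∑' n, p n * σ n * phi' (x + σ n * -α)) * (z'.2 - -α)) ≤ hFDR p σ z' := by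
  have hsa : Summable fun n => p n * phi' (x + σ n * -α) := summable_phi' hp0 hd x
  have hsph : Summable fun n => p n * phi (x + σ n * -α) := summable_phi hp0 hd x
  have hsph' : Summable fun n => p n * phi (z'.1 + σ n * z'.2) := summable_phi hp0 hz' z'.1
  have h_each : ∀ n, p n * phi' (x + σ n * -α) * (z'.1 - x)
      + p n * σ n * phi' (x + σ n * -α) * (z'.2 - -α)
      ≤ p n * phi (z'.1 + σ n * z'.2) - p n * phi (x + σ n * -α) := by
    intro n
    have ht := tangent_le (x + σ n * -α) (z'.1 + σ n * z'.2)
    have := mul_le_mul_of_nonneg_left ht (hp0 n)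
    nlinarith [this]
  have hlhs : Summable fun n => p n * phi' (x + σ n * -α) * (z'.1 - x)
      + p n * σ n * phi' (x + σ n * -α) * (z'.2 - -α) :=
    (hsa.mul_right _).add (hsb.mul_right _)
  have hrhs : Summable fun n => p n * phi (z'.1 + σ n * z'.2) - p n * phi (x + σ n * -α) :=
    hsph'.sub hsph
  have hts := Summable.tsum_le_tsum h_each hlhs hrhs
  rw [Summable.tsum_add (hsa.mul_right _) (hsb.mul_right _), tsum_mul_right, tsum_mul_right,
    Summable.tsum_sub hsph' hsph] at hts
  rw [hFDR_eq_phi (x, -α), hFDR_eq_phi z']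
  simp only at hts ⊢
  linarith [hts]
lemma phi'_continuous : Continuous phi' := by
  unfold phi'
  exact Real.continuous_exp.div (continuous_const.add Real.continuous_exp)
    (fun t => (one_add_exp_pos t).ne')

lemma partial_b_le (hp : ∀ n, 1 ≤ p n) (hσpos : ∀ n, 0 < σ n) {α : ℝ}
    (h1 : Set.Iio (-α) ⊆ fDom p σ) (hd : -α ∈ fDom p σ) (x : ℝ) {w : ℝ × ℝ}
    (hw : w ∈ subd2 (fun z => ((hFDe p σ z : ℝ≥0∞) : EReal)) (x, -α)) (N : ℕ) :
    ∑ k ∈ Finset.range N, p k * σ k * phi' (x + σ k * -α) ≤ w.2 := by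
  have hp0 : ∀ n, 0 ≤ p n := fun n => le_trans zero_le_one (hp n)
  have hreal := (subd2_iff_real hp (z := ((x, -α) : ℝ × ℝ)) hd w).1 hw
  have key : ∀ d : ℝ, 0 < d →
      ∑ k ∈ Finset.range N, p k * σ k * phi' (x + σ k * (-α - d)) ≤ w.2 := by
    intro d hdpos
    have hz' : ((x, -α - d) : ℝ × ℝ).2 ∈ fDom p σ := h1 (show -α - d < -α by linarith)
    have h := hreal (x, -α - d) hz'
    simp only at h
    have h' : hFDR p σ (x, -α) - hFDR p σ (x, -α - d) ≤ w.2 * d := by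
      have he : -α - d - -α = -d := by ring
      rw [he] at h
      nlinarith [h]
    have hsph : Summable fun n => p n * phi (x + σ n * -α) := summable_phi hp0 hd x
    have hsph' : Summable fun n => p n * phi (x + σ n * (-α - d)) := summable_phi hp0 hz' x
    have hdiff : hFDR p σ (x, -α) - hFDR p σ (x, -α - d) =
        ∑' n, (p n * phi (x + σ n * -α) - p n * phi (x + σ n * (-α - d))) := by
      rw [hFDR_eq_phi, hFDR_eq_phi, Summable.tsum_sub hsph hsph']
    have hterm_nonneg : ∀ n, 0 ≤ p n * phi (x + σ n * -α) - p n * phi (x + σ n * (-α - d)) := by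
      intro n
      have hmle : x + σ n * (-α - d) ≤ x + σ n * -α := by nlinarith [hσpos n]
      have := mul_le_mul_of_nonneg_left (phi_mono hmle) (hp0 n)
      linarith
    have hpartial : ∑ k ∈ Finset.range N,
        (p k * phi (x + σ k * -α) - p k * phi (x + σ k * (-α - d))) ≤
        ∑' n, (p n * phi (x + σ n * -α) - p n * phi (x + σ n * (-α - d))) :=
      Summable.sum_le_tsum _ (fun i _ => hterm_nonneg i) (hsph.sub hsph')
    have hterm_ge : ∀ k, p k * σ k * phi' (x + σ k * (-α - d)) * d ≤
        p k * phi (x + σ k * -α) - p k * phi (x + σ k * (-α - d)) := by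
      intro k
      have ht := tangent_le (x + σ k * (-α - d)) (x + σ k * -α)
      have := mul_le_mul_of_nonneg_left ht (hp0 k)
      nlinarith [this]
    have hchain : (∑ k ∈ Finset.range N, p k * σ k * phi' (x + σ k * (-α - d))) * d ≤
        w.2 * d := by
      rw [Finset.sum_mul]
      refine le_trans (Finset.sum_le_sum fun k _ => hterm_ge k) ?_
      refine le_trans hpartial ?_
      rw [← hdiff]; exact h'
    exact le_of_mul_le_mul_right hchain hdpos
  have hF : Continuous (fun d : ℝ =>
      ∑ k ∈ Finset.range N, p k * σ k * phi' (x + σ k * (-α - d))) := by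
    refine continuous_finset_sum _ fun k _ => continuous_const.mul ?_
    exact phi'_continuous.comp (by continuity)
  have htd : Tendsto (fun d : ℝ =>
      ∑ k ∈ Finset.range N, p k * σ k * phi' (x + σ k * (-α - d)))
      (nhdsWithin 0 (Set.Ioi 0)) (nhds (∑ k ∈ Finset.range N, p k * σ k * phi' (x + σ k * -α))) := by
    have := (hF.tendsto 0).mono_left (nhdsWithin_le_nhds (s := Set.Ioi (0:ℝ)))
    convert this using 2
    norm_num
  exact le_of_tendsto htd (eventually_nhdsWithin_of_forall fun d hd' => key d hd')

lemma fst_eq_A (hp : ∀ n, 1 ≤ p n) {α : ℝ} (hd : -α ∈ fDom p σ) (x : ℝ) {w : ℝ × ℝ}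
    (hw : w ∈ subd2 (fun z => ((hFDe p σ z : ℝ≥0∞) : EReal)) (x, -α)) :
    w.1 = ∑' n, p n * phi' (x + σ n * -α) := by
  have hp0 : ∀ n, 0 ≤ p n := fun n => le_trans zero_le_one (hp n)
  have hreal := (subd2_iff_real hp (z := ((x, -α) : ℝ × ℝ)) hd w).1 hw
  have hterm : ∀ (n : ℕ) (x' : ℝ), x' ∈ Set.Ioo (x-1) (x+1) →
      HasDerivAt (fun x' => p n * phi (x' + σ n * -α)) (p n * phi' (x' + σ n * -α)) x' := by
    intro n x' _
    have h0 : HasDerivAt (fun x' : ℝ => x' + σ n * -α) 1 x' := (hasDerivAt_id x').add_const _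
    have := ((hasDerivAt_phi (x' + σ n * -α)).comp x' h0).const_mul (p n)
    simpa [mul_one] using this
  have hbd : ∀ (n : ℕ) (x' : ℝ), x' ∈ Set.Ioo (x-1) (x+1) →
      ‖p n * phi' (x' + σ n * -α)‖ ≤ p n * Real.exp (x + 1 + σ n * -α) := by
    intro n x' hx'
    rw [Real.norm_eq_abs, abs_of_nonneg (mul_nonneg (hp0 n) (phi'_nonneg _))]
    refine mul_le_mul_of_nonneg_left (le_trans (phi'_le_exp _) (Real.exp_le_exp.2 ?_)) (hp0 n)
    have := hx'.2
    linarith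
  have hψ : HasDerivAt (fun x' => hFDR p σ (x', -α)) (∑' n, p n * phi' (x + σ n * -α)) x := by
    have hxmem : x ∈ Set.Ioo (x-1) (x+1) := by constructor <;> linarith
    exact hasDerivAt_tsum_of_isPreconnected (summable_shift hd (x + 1))
      (isOpen_Ioo (a := x - 1) (b := x + 1)) ((convex_Ioo _ _).isPreconnected)
      hterm hbd hxmem (summable_phi hp0 hd x) hxmem
  set A := ∑' n, p n * phi' (x + σ n * -α) with hA
  have hderiv : HasDerivAt (fun x' => hFDR p σ (x', -α) - w.1 * x') (A - w.1) x := by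
    have h2 : HasDerivAt (fun x' : ℝ => w.1 * x') w.1 x := by
      simpa using (hasDerivAt_id x).const_mul w.1
    exact hψ.sub h2
  have hmin : IsLocalMin (fun x' => hFDR p σ (x', -α) - w.1 * x') x := by
    refine Filter.Eventually.of_forall fun x' => ?_
    have h := hreal (x', -α) hd
    simp only at h
    have he : -α - -α = 0 := by ring
    rw [he] at h
    simp only
    nlinarith [h]
  have := hmin.hasDerivAt_eq_zero hderiv
  linarith [this]

lemma summable_b_iff (hp0 : ∀ n, 0 ≤ p n) (hσpos : ∀ n, 0 < σ n) {α : ℝ} (hα : 0 ≤ α) (x : ℝ) :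
    (Summable fun n => p n * σ n * phi' (x + σ n * -α)) ↔
      Summable fun n => p n * σ n * Real.exp (x + σ n * -α) := by
  constructor
  · intro h
    refine (h.mul_left (1 + Real.exp x)).of_nonneg_of_le
      (fun n => mul_nonneg (mul_nonneg (hp0 n) (hσpos n).le) (Real.exp_pos _).le)
      (fun n => ?_)
    have hle : x + σ n * -α ≤ x := by nlinarith [hσpos n]
    have := exp_le_phi'_mul (x + σ n * -α) x hle
    have hpos := one_add_exp_pos x
    rw [div_le_iff₀ hpos] at this
    calc p n * σ n * Real.exp (x + σ n * -α)
        ≤ p n * σ n * (phi' (x + σ n * -α) * (1 + Real.exp x)) :=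
          mul_le_mul_of_nonneg_left this (mul_nonneg (hp0 n) (hσpos n).le)
      _ = (1 + Real.exp x) * (p n * σ n * phi' (x + σ n * -α)) := by ring
  · intro h
    exact h.of_nonneg_of_le
      (fun n => mul_nonneg (mul_nonneg (hp0 n) (hσpos n).le) (phi'_nonneg _))
      (fun n => mul_le_mul_of_nonneg_left (phi'_le_exp _)
        (mul_nonneg (hp0 n) (hσpos n).le))

end
theorem stmt14 (p σ : ℕ → ℝ) (hp : ∀ n, 1 ≤ p n) (hσpos : ∀ n, 0 < σ n)
    (hσtop : Tendsto σ atTop atTop) (hne : (fDom p σ).Nonempty)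
    (α : ℝ) (hα : 0 ≤ α) (h1 : Set.Iio (-α) ⊆ fDom p σ) (h2 : fDom p σ ⊆ Set.Iic (-α)) :
    (interior {z : ℝ × ℝ | hFDe p σ z < ⊤} = Set.univ ×ˢ Set.Iio (-α)) ∧
    (∀ x y : ℝ, y < -α →
      (Summable fun n => p n * (Real.exp (x + σ n * y) / (1 + Real.exp (x + σ n * y)))) ∧
      (Summable fun n => p n * σ n * (Real.exp (x + σ n * y) / (1 + Real.exp (x + σ n * y)))) ∧
      HasFDerivAt (hFDR p σ)
        (gradCLM (∑' n, p n * (Real.exp (x + σ n * y) / (1 + Real.exp (x + σ n * y))))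
          (∑' n, p n * σ n * (Real.exp (x + σ n * y) / (1 + Real.exp (x + σ n * y)))))
        (x, y)) ∧
    (-α ∈ fDom p σ → ∀ x : ℝ,
      ((subd2 (fun z => ((hFDe p σ z : ℝ≥0∞) : EReal)) (x, -α)).Nonempty ↔
        Summable fun n => p n * σ n * Real.exp (x - σ n * α)) ∧
      ((Summable fun n => p n * σ n * Real.exp (x - σ n * α)) ↔
        ∃ L : ℝ × ℝ, Tendsto (fun N => ∑ k ∈ Finset.range N,
          (p k * (Real.exp (x - σ k * α) / (1 + Real.exp (x - σ k * α)))) • ((1 : ℝ), σ k))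
          atTop (nhds L)) ∧
      (∀ ub vb : ℝ, Tendsto (fun N => ∑ k ∈ Finset.range N,
          (p k * (Real.exp (x - σ k * α) / (1 + Real.exp (x - σ k * α)))) • ((1 : ℝ), σ k))
          atTop (nhds (ub, vb)) →
        subd2 (fun z => ((hFDe p σ z : ℝ≥0∞) : EReal)) (x, -α) = {ub} ×ˢ Set.Ici vb)) := by
  have hp0 : ∀ n, 0 ≤ p n := fun n => le_trans zero_le_one (hp n)
  refine ⟨interior_eq hp h1 h2, ?_, ?_⟩
  · intro x y hy
    exact ⟨summable_phi' hp0 (h1 hy) x, summable_sigma_phi' hp0 hσpos h1 hy x,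
      part2 hp hσpos h1 hy⟩
  · intro hd x
    have hconv : ∀ n : ℕ, x - σ n * α = x + σ n * -α := fun n => by ring
    have hsa : Summable fun n => p n * phi' (x + σ n * -α) := summable_phi' hp0 hd x
    have hSbstmt_iff : (Summable fun n => p n * σ n * Real.exp (x - σ n * α)) ↔
        (Summable fun n => p n * σ n * phi' (x + σ n * -α)) := by
      rw [summable_b_iff hp0 hσpos hα x]
      exact summable_congr fun n => by rw [hconv n]
    have hterm : ∀ k : ℕ,
        (p k * (Real.exp (x - σ k * α) / (1 + Real.exp (x - σ k * α)))) • ((1:ℝ), σ k)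
          = (p k * phi' (x + σ k * -α), p k * σ k * phi' (x + σ k * -α)) := by
      intro k
      rw [Prod.smul_mk, smul_eq_mul, smul_eq_mul, mul_one]
      refine Prod.ext ?_ ?_ <;> simp only [phi', hconv k] <;> ring
    have hps : ∀ N : ℕ, (∑ k ∈ Finset.range N,
        (p k * (Real.exp (x - σ k * α) / (1 + Real.exp (x - σ k * α)))) • ((1:ℝ), σ k))
        = (∑ k ∈ Finset.range N, p k * phi' (x + σ k * -α),
           ∑ k ∈ Finset.range N, p k * σ k * phi' (x + σ k * -α)) := by
      intro N
      rw [Finset.sum_congr rfl fun k _ => hterm k]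
      exact Prod.ext (by rw [Prod.fst_sum]) (by rw [Prod.snd_sum])
    have hbnonneg : ∀ n, 0 ≤ p n * σ n * phi' (x + σ n * -α) :=
      fun n => mul_nonneg (mul_nonneg (hp0 n) (hσpos n).le) (phi'_nonneg _)
    have hmemof : ∀ v : ℝ, (Summable fun n => p n * σ n * phi' (x + σ n * -α)) →
        (∑' n, p n * σ n * phi' (x + σ n * -α)) ≤ v →
        ((∑' n, p n * phi' (x + σ n * -α)), v) ∈
          subd2 (fun z => ((hFDe p σ z : ℝ≥0∞) : EReal)) (x, -α) := by
      intro v hsb hv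
      rw [subd2_iff_real hp (z := ((x, -α) : ℝ × ℝ)) hd]
      intro z' hz'
      have hcore := core_ineq hp0 hσpos hd hsb hz'
      have hz'le : z'.2 ≤ -α := h2 hz'
      have hmul : v * (z'.2 - -α) ≤ (∑' n, p n * σ n * phi' (x + σ n * -α)) * (z'.2 - -α) :=
        mul_le_mul_of_nonpos_right hv (by linarith)
      simp only
      linarith [hcore]
    refine ⟨⟨?_, ?_⟩, ⟨?_, ?_⟩, ?_⟩
    · rintro ⟨w, hw⟩
      rw [hSbstmt_iff]
      exact summable_of_sum_range_le hbnonneg (partial_b_le hp hσpos h1 hd x hw)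
    · intro hS
      have hsb := hSbstmt_iff.1 hS
      exact ⟨_, hmemof _ hsb le_rfl⟩
    · intro hS
      have hsb := hSbstmt_iff.1 hS
      refine ⟨(∑' n, p n * phi' (x + σ n * -α), ∑' n, p n * σ n * phi' (x + σ n * -α)), ?_⟩
      have hpair := (hsa.hasSum.prodMk hsb.hasSum).tendsto_sum_nat
      refine hpair.congr fun N => ?_
      rw [hps N]
      exact Prod.ext (by rw [Prod.fst_sum]) (by rw [Prod.snd_sum])
    · rintro ⟨L, hL⟩
      have hsnd : Tendsto (fun N => ∑ k ∈ Finset.range N, p k * σ k * phi' (x + σ k * -α))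
          atTop (nhds L.2) := by
        have := (continuous_snd.tendsto L).comp hL
        refine this.congr fun N => ?_
        show (∑ k ∈ Finset.range N, _ • ((1:ℝ), σ k)).2 = _
        rw [hps N]
      have hmono : Monotone (fun N => ∑ k ∈ Finset.range N, p k * σ k * phi' (x + σ k * -α)) := by
        intro M N h
        exact Finset.sum_le_sum_of_subset_of_nonneg (Finset.range_subset_range.2 h)
          (fun i _ _ => hbnonneg i)
      rw [hSbstmt_iff]
      exact summable_of_sum_range_le hbnonneg (fun N => hmono.ge_of_tendsto hsnd N)
    · intro ub vb hL
      have hsnd : Tendsto (fun N => ∑ k ∈ Finset.range N, p k * σ k * phi' (x + σ k * -α))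
          atTop (nhds vb) := by
        have := (continuous_snd.tendsto (ub, vb)).comp hL
        refine this.congr fun N => ?_
        show (∑ k ∈ Finset.range N, _ • ((1:ℝ), σ k)).2 = _
        rw [hps N]
      have hmono : Monotone (fun N => ∑ k ∈ Finset.range N, p k * σ k * phi' (x + σ k * -α)) := by
        intro M N h
        exact Finset.sum_le_sum_of_subset_of_nonneg (Finset.range_subset_range.2 h)
          (fun i _ _ => hbnonneg i)
      have hsb : Summable fun n => p n * σ n * phi' (x + σ n * -α) :=
        summable_of_sum_range_le hbnonneg (fun N => hmono.ge_of_tendsto hsnd N)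
      have hpair := (hsa.hasSum.prodMk hsb.hasSum).tendsto_sum_nat
      have hL' : Tendsto (fun N => ∑ k ∈ Finset.range N,
          (p k * (Real.exp (x - σ k * α) / (1 + Real.exp (x - σ k * α)))) • ((1:ℝ), σ k))
          atTop (nhds (∑' n, p n * phi' (x + σ n * -α), ∑' n, p n * σ n * phi' (x + σ n * -α))) := by
        refine hpair.congr fun N => ?_
        rw [hps N]
        exact Prod.ext (by rw [Prod.fst_sum]) (by rw [Prod.snd_sum])
      have huv : (ub, vb) = (∑' n, p n * phi' (x + σ n * -α),
          ∑' n, p n * σ n * phi' (x + σ n * -α)) := tendsto_nhds_unique hL hL'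
      have hub : ub = ∑' n, p n * phi' (x + σ n * -α) := congrArg Prod.fst huv
      have hvb : vb = ∑' n, p n * σ n * phi' (x + σ n * -α) := congrArg Prod.snd huv
      ext w
      simp only [Set.mem_prod, Set.mem_singleton_iff, Set.mem_Ici]
      constructor
      · intro hw
        refine ⟨?_, ?_⟩
        · rw [hub]; exact fst_eq_A hp hd x hw
        · rw [hvb]
          exact le_of_tendsto hsb.hasSum.tendsto_sum_nat
            (Filter.Eventually.of_forall (partial_b_le hp hσpos h1 hd x hw))
      · rintro ⟨hw1, hw2⟩
        have hw' : w = ((∑' n, p n * phi' (x + σ n * -α)), w.2) :=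
          Prod.ext (by rw [hw1, hub]) rfl
        rw [hw']
        exact hmemof w.2 hsb (by rw [hvb] at hw2; exact hw2)
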